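/- For the first-black-hat strategy f(y) = 2^{-⌊log₂ y⌋} in the two-player continuous Levine game, for every p ≥ 1 and every x ∈ [2^{-p}, 2^{-(p-1)}), one has sup_{u ≥ 0} ∫₀¹ ε(f(y)x) ε(u y) dy = 2^{-p} = ∫₀¹ ε(f(y)x) ε(f(x)y) dy. Consequently sup_{g measurable nonnegative} ∫₀¹∫₀¹ ε(f(y)x) ε(g(x)y) dx dy = 1/3, achieved by g = f; i.e., the first-black-hat strategy is a best response to itself. -/

import Mathlib

/-- `ε(t) = ⌊t⌋ - 2⌊t/2⌋`, the parity of `⌊t⌋`. -/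
noncomputable def eps (t : ℝ) : ℝ := (⌊t⌋ : ℝ) - 2 * (⌊t / 2⌋ : ℝ)

/-- The first-black-hat strategy `f(y) = 2^{-⌊log₂ y⌋}`. -/
noncomputable def fbh (y : ℝ) : ℝ := (2 : ℝ) ^ (-⌊Real.logb 2 y⌋)

open MeasureTheory Set intervalIntegral

/-! ### Basic facts about `eps` -/

lemma floor_half (t : ℝ) : ⌊t / 2⌋ = ⌊t⌋ / 2 := by
  have h1 := Int.floor_le t
  have h2 := Int.lt_floor_add_one t
  have e1 : (2 * (⌊t⌋ / 2) : ℤ) ≤ ⌊t⌋ := by omega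
  have e2 : (⌊t⌋ : ℤ) ≤ 2 * (⌊t⌋ / 2) + 1 := by omega
  have c1 : 2 * ((⌊t⌋ / 2 : ℤ) : ℝ) ≤ ((⌊t⌋ : ℤ) : ℝ) := by exact_mod_cast e1
  have c2 : ((⌊t⌋ : ℤ) : ℝ) ≤ 2 * ((⌊t⌋ / 2 : ℤ) : ℝ) + 1 := by exact_mod_cast e2
  refine Int.floor_eq_iff.2 ⟨by linarith, by linarith⟩

lemma eps_eq (t : ℝ) : eps t = ((⌊t⌋ % 2 : ℤ) : ℝ) := by
  rw [eps, floor_half]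
  have h : (⌊t⌋ % 2 : ℤ) = ⌊t⌋ - 2 * (⌊t⌋ / 2) := by omega
  rw [h]; push_cast; ring

lemma eps_cases (t : ℝ) : eps t = 0 ∨ eps t = 1 := by
  rw [eps_eq]
  rcases Int.emod_two_eq ⌊t⌋ with h | h <;> simp [h]

lemma eps_nonneg (t : ℝ) : 0 ≤ eps t := by
  rcases eps_cases t with h | h <;> simp [h]

lemma eps_le_one (t : ℝ) : eps t ≤ 1 := by
  rcases eps_cases t with h | h <;> simp [h]

lemma eps_abs_le_one (t : ℝ) : |eps t| ≤ 1 :=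
  abs_le.2 ⟨by linarith [eps_nonneg t], eps_le_one t⟩

lemma eps_of_Ico {t : ℝ} (h0 : 0 ≤ t) (h1 : t < 1) : eps t = 0 := by
  rw [eps_eq, Int.floor_eq_zero_iff.2 ⟨h0, h1⟩]; norm_num

lemma eps_of_Ico' {t : ℝ} (h0 : 1 ≤ t) (h1 : t < 2) : eps t = 1 := by
  have h : ⌊t⌋ = 1 := Int.floor_eq_iff.2 ⟨by exact_mod_cast h0, by norm_num [h1]⟩
  rw [eps_eq, h]; norm_num

lemma eps_add_one (t : ℝ) : eps (t + 1) = 1 - eps t := by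
  rw [eps_eq, eps_eq, Int.floor_add_one]
  have h : (⌊t⌋ + 1) % 2 = 1 - ⌊t⌋ % 2 := by omega
  rw [h]; push_cast; ring

lemma measurable_eps : Measurable eps := by
  have h : Measurable fun t : ℝ => (⌊t⌋ : ℝ) :=
    measurable_from_top.comp Int.measurable_floor
  exact h.sub ((h.comp (measurable_id.div_const 2)).const_mul 2)

lemma measurable_fbh : Measurable fbh := by
  have h1 : Measurable fun y : ℝ => Real.logb 2 y := by
    simpa [Real.logb] using Real.measurable_log.div_const (Real.log 2)
  show Measurable fun y : ℝ => (2 : ℝ) ^ (-⌊Real.logb 2 y⌋)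
  exact (measurable_from_top (f := fun n : ℤ => (2 : ℝ) ^ (-n))).comp
    (Int.measurable_floor.comp h1)

lemma fbh_pos (y : ℝ) : 0 < fbh y := zpow_pos (by norm_num) _

/-! ### zpow helpers -/

lemma two_zpow_le_one {n : ℤ} (hn : n ≤ 0) : (2 : ℝ) ^ n ≤ 1 := by
  calc (2 : ℝ) ^ n ≤ 2 ^ (0 : ℤ) := zpow_le_zpow_right₀ one_le_two hn
  _ = 1 := by norm_num

lemma two_zpow_mono {a b : ℤ} (h : a ≤ b) : (2 : ℝ) ^ a ≤ 2 ^ b :=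
  zpow_le_zpow_right₀ one_le_two h

/-! ### dyadic intervals and `fbh` -/

lemma logb_two_zpow (q : ℤ) : Real.logb 2 ((2 : ℝ) ^ q) = q := by
  rw [← Real.rpow_intCast 2 q, Real.logb_rpow (by norm_num) (by norm_num)]

lemma floor_logb_eq {y : ℝ} {q : ℤ} (hy : (2 : ℝ) ^ q ≤ y) (hy2 : y < 2 ^ (q + 1)) :
    ⌊Real.logb 2 y⌋ = q := by
  have hq : (0 : ℝ) < 2 ^ q := zpow_pos (by norm_num) _
  have h1 : (q : ℝ) ≤ Real.logb 2 y := by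
    have := Real.logb_le_logb_of_le (b := 2) one_lt_two hq hy
    rwa [logb_two_zpow] at this
  have h2 : Real.logb 2 y < (q : ℝ) + 1 := by
    have := Real.logb_lt_logb (b := 2) one_lt_two (lt_of_lt_of_le hq hy) hy2
    rw [logb_two_zpow] at this
    exact_mod_cast this
  exact Int.floor_eq_iff.2 ⟨h1, h2⟩

lemma fbh_eq {y : ℝ} {q : ℤ} (hy : (2 : ℝ) ^ (-q) ≤ y) (hy2 : y < 2 ^ (-q + 1)) :
    fbh y = 2 ^ q := by
  rw [fbh, floor_logb_eq hy hy2, neg_neg]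

lemma mem_dyadic {x : ℝ} (h0 : 0 < x) (h1 : x < 1) :
    ∃ p : ℤ, 1 ≤ p ∧ (2 : ℝ) ^ (-p) ≤ x ∧ x < 2 ^ (-p + 1) := by
  refine ⟨-⌊Real.logb 2 x⌋, ?_, ?_, ?_⟩
  · have hneg : Real.logb 2 x < 0 := Real.logb_neg (by norm_num) h0 h1
    have : ⌊Real.logb 2 x⌋ < 0 := Int.floor_lt.2 (by exact_mod_cast hneg)
    omega
  · rw [neg_neg]
    calc (2 : ℝ) ^ (⌊Real.logb 2 x⌋) = (2 : ℝ) ^ ((⌊Real.logb 2 x⌋ : ℝ)) :=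
          (Real.rpow_intCast 2 _).symm
    _ ≤ (2 : ℝ) ^ (Real.logb 2 x) :=
          Real.rpow_le_rpow_of_exponent_le one_le_two (Int.floor_le _)
    _ = x := Real.rpow_logb (by norm_num) (by norm_num) h0
  · rw [neg_neg]
    calc x = (2 : ℝ) ^ (Real.logb 2 x) := (Real.rpow_logb (by norm_num) (by norm_num) h0).symm
    _ < (2 : ℝ) ^ ((⌊Real.logb 2 x⌋ + 1 : ℤ) : ℝ) := by
          apply Real.rpow_lt_rpow_of_exponent_lt one_lt_two
          push_cast
          exact Int.lt_floor_add_one _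
    _ = (2 : ℝ) ^ (⌊Real.logb 2 x⌋ + 1) := Real.rpow_intCast 2 _

/-! ### interval integrability of bounded measurable functions -/

lemma intervalIntegrable_of_bdd {f : ℝ → ℝ} (hm : Measurable f) (C : ℝ)
    (hC : ∀ t, |f t| ≤ C) (a b : ℝ) : IntervalIntegrable f volume a b := by
  rw [intervalIntegrable_iff]
  have hc : IntegrableOn (fun _ : ℝ => C) (Set.uIoc a b) volume :=
    integrableOn_const measure_Ioc_lt_top.ne
  exact hc.mono' hm.aestronglyMeasurable (Filter.Eventually.of_forall fun t => by
    simpa using hC t)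

lemma measurable_integrand (x u : ℝ) :
    Measurable fun y => eps (fbh y * x) * eps (u * y) :=
  (measurable_eps.comp (measurable_fbh.mul_const x)).mul
    (measurable_eps.comp (measurable_id.const_mul u))

/-! ### the half bound -/

lemma integral_eps_le {T : ℝ} (hT : 0 ≤ T) : (∫ t in (0:ℝ)..T, eps t) ≤ T / 2 := by
  have hI : ∀ a b : ℝ, IntervalIntegrable eps volume a b :=
    intervalIntegrable_of_bdd measurable_eps 1 eps_abs_le_one
  set A := ∫ t in (0:ℝ)..T, eps t with hA
  have h1 : (∫ t in (0:ℝ)..1, eps t) = 0 := by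
    rw [intervalIntegral.integral_of_le zero_le_one, MeasureTheory.integral_Ioc_eq_integral_Ioo,
      MeasureTheory.setIntegral_congr_fun measurableSet_Ioo
        (fun t ht => eps_of_Ico ht.1.le ht.2)]
    simp
  have h2 : (∫ t in (1:ℝ)..(T+1), eps t) = T - A := by
    have hshift := intervalIntegral.integral_comp_add_right (a := 0) (b := T) eps 1
    rw [zero_add] at hshift
    rw [← hshift]
    have heq : ∀ t, eps (t + 1) = 1 - eps t := eps_add_one
    rw [intervalIntegral.integral_congr (fun t _ => heq t),
      intervalIntegral.integral_sub intervalIntegrable_const (hI 0 T),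
      intervalIntegral.integral_const]
    simp [hA]
  have h3 : A ≤ ∫ t in (0:ℝ)..(T+1), eps t := by
    rw [← intervalIntegral.integral_add_adjacent_intervals (hI 0 T) (hI T (T+1))]
    have h0 : 0 ≤ ∫ t in T..(T+1), eps t :=
      intervalIntegral.integral_nonneg (by linarith) (fun t _ => eps_nonneg t)
    linarith
  have h4 : (∫ t in (0:ℝ)..(T+1), eps t) = T - A := by
    rw [← intervalIntegral.integral_add_adjacent_intervals (hI 0 1) (hI 1 (T+1)), h1, h2]
    ring
  rw [h4] at h3
  linarith

lemma integral_eps_mul_le {u L : ℝ} (hu : 0 ≤ u) (hL : 0 ≤ L) :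
    (∫ y in (0:ℝ)..L, eps (u * y)) ≤ L / 2 := by
  rcases eq_or_lt_of_le hu with rfl | hu
  · have h : ∀ y : ℝ, eps ((0:ℝ) * y) = 0 := fun y => by
      rw [zero_mul]; exact eps_of_Ico le_rfl zero_lt_one
    simp only [h, intervalIntegral.integral_zero]
    linarith
  · rw [intervalIntegral.integral_comp_mul_left eps (ne_of_gt hu), mul_zero]
    have h := integral_eps_le (T := u * L) (by positivity)
    rw [smul_eq_mul]
    calc u⁻¹ * ∫ t in (0:ℝ)..(u*L), eps t ≤ u⁻¹ * (u * L / 2) := by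
          apply mul_le_mul_of_nonneg_left h (by positivity)
    _ = L / 2 := by field_simp

/-! ### pointwise analysis of the integrand -/

section Pointwise

variable {p : ℤ} {x : ℝ}

lemma x_pos (hx1 : (2 : ℝ) ^ (-p) ≤ x) : 0 < x :=
  lt_of_lt_of_le (zpow_pos (by norm_num) _) hx1

lemma x_lt_one (hp : 1 ≤ p) (hx2 : x < (2 : ℝ) ^ (-p + 1)) : x < 1 :=
  lt_of_lt_of_le hx2 (two_zpow_le_one (by omega))

lemma fbh_one : fbh 1 = 1 := by
  rw [fbh, Real.logb_one]
  norm_num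

lemma fbh_zero : fbh 0 = 1 := by
  rw [fbh, Real.logb, Real.log_zero, zero_div]
  norm_num

/-- On `[2^{-p+1}, 1]` the first factor vanishes. -/
lemma first_factor_zero (hp : 1 ≤ p) (hx1 : (2 : ℝ) ^ (-p) ≤ x) (hx2 : x < (2 : ℝ) ^ (-p + 1))
    {y : ℝ} (hyL : (2 : ℝ) ^ (-p + 1) ≤ y) (hy1 : y ≤ 1) : eps (fbh y * x) = 0 := by
  have hx0 : 0 < x := x_pos hx1
  have hxlt1 : x < 1 := x_lt_one hp hx2
  rcases eq_or_lt_of_le hy1 with rfl | hy1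
  · rw [fbh_one, one_mul]
    exact eps_of_Ico hx0.le hxlt1
  · have hy0 : 0 < y := lt_of_lt_of_le (by positivity) hyL
    obtain ⟨q, hq1, hyq1, hyq2⟩ := mem_dyadic hy0 hy1
    have hqp : q < p := by
      by_contra h
      push_neg at h
      have : y < (2 : ℝ) ^ (-p + 1) :=
        lt_of_lt_of_le hyq2 (two_zpow_mono (by omega))
      linarith
    rw [fbh_eq hyq1 hyq2]
    apply eps_of_Ico (by positivity)
    calc (2 : ℝ) ^ q * x < 2 ^ q * 2 ^ (-p + 1) := by
          apply mul_lt_mul_of_pos_left hx2 (zpow_pos (by norm_num) _)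
    _ = 2 ^ (q + (-p + 1)) := (zpow_add₀ (by norm_num) _ _).symm
    _ ≤ 2 ^ (0 : ℤ) := two_zpow_mono (by omega)
    _ = 1 := by norm_num

lemma pointwise_eq_indicator (hp : 1 ≤ p) (hx1 : (2 : ℝ) ^ (-p) ≤ x)
    (hx2 : x < (2 : ℝ) ^ (-p + 1)) {y : ℝ} (hy0 : 0 ≤ y) (hy1 : y ≤ 1) :
    eps (fbh y * x) * eps ((2 : ℝ) ^ p * y) =
      Set.indicator (Set.Ico ((2 : ℝ) ^ (-p)) ((2 : ℝ) ^ (-p + 1))) (fun _ => (1 : ℝ)) y := by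
  have hx0 : 0 < x := x_pos hx1
  have hxlt1 : x < 1 := x_lt_one hp hx2
  have hL1 : (2 : ℝ) ^ (-p + 1) ≤ 1 := two_zpow_le_one (by omega)
  rcases eq_or_lt_of_le hy0 with rfl | hy0
  · rw [fbh_zero, one_mul, eps_of_Ico hx0.le hxlt1, zero_mul,
      Set.indicator_of_notMem
        (fun h => absurd h.1 (not_le.2 (zpow_pos (show (0:ℝ) < 2 by norm_num) (-p))))]
  rcases eq_or_lt_of_le hy1 with rfl | hy1
  · rw [fbh_one, one_mul, eps_of_Ico hx0.le hxlt1, zero_mul,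
      Set.indicator_of_notMem (fun h => absurd h.2 (not_lt.2 hL1))]
  obtain ⟨q, hq1, hyq1, hyq2⟩ := mem_dyadic hy0 hy1
  rw [fbh_eq hyq1 hyq2]
  rcases lt_trichotomy q p with hqp | hqp | hqp
  · -- q < p : first factor vanishes, y is to the right of the interval
    have h1 : eps ((2 : ℝ) ^ q * x) = 0 := by
      apply eps_of_Ico (by positivity)
      calc (2 : ℝ) ^ q * x < 2 ^ q * 2 ^ (-p + 1) :=
            mul_lt_mul_of_pos_left hx2 (zpow_pos (by norm_num) _)
      _ = 2 ^ (q + (-p + 1)) := (zpow_add₀ (by norm_num) _ _).symm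
      _ ≤ 2 ^ (0 : ℤ) := two_zpow_mono (by omega)
      _ = 1 := by norm_num
    rw [h1, zero_mul, Set.indicator_of_notMem]
    intro hmem
    exact absurd (lt_of_lt_of_le hmem.2 (le_trans (two_zpow_mono (by omega)) hyq1)) (lt_irrefl y)
  · -- q = p : both factors are 1 and y lies in the interval
    subst hqp
    have h1 : eps ((2 : ℝ) ^ q * x) = 1 := by
      apply eps_of_Ico'
      · calc (1 : ℝ) = 2 ^ q * 2 ^ (-q) := by
              rw [← zpow_add₀ (show (2:ℝ) ≠ 0 by norm_num)]; norm_num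
        _ ≤ 2 ^ q * x := mul_le_mul_of_nonneg_left hx1 (by positivity)
      · calc (2 : ℝ) ^ q * x < 2 ^ q * 2 ^ (-q + 1) :=
              mul_lt_mul_of_pos_left hx2 (zpow_pos (by norm_num) _)
        _ = 2 := by
              rw [← zpow_add₀ (show (2:ℝ) ≠ 0 by norm_num)]; norm_num
    have h2 : eps ((2 : ℝ) ^ q * y) = 1 := by
      apply eps_of_Ico'
      · calc (1 : ℝ) = 2 ^ q * 2 ^ (-q) := by
              rw [← zpow_add₀ (show (2:ℝ) ≠ 0 by norm_num)]; norm_num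
        _ ≤ 2 ^ q * y := mul_le_mul_of_nonneg_left hyq1 (by positivity)
      · calc (2 : ℝ) ^ q * y < 2 ^ q * 2 ^ (-q + 1) :=
              mul_lt_mul_of_pos_left hyq2 (zpow_pos (by norm_num) _)
        _ = 2 := by
              rw [← zpow_add₀ (show (2:ℝ) ≠ 0 by norm_num)]; norm_num
    rw [h1, h2, Set.indicator_of_mem
      (show y ∈ Set.Ico ((2:ℝ) ^ (-q)) ((2:ℝ) ^ (-q + 1)) from ⟨hyq1, hyq2⟩)]
    norm_num
  · -- p < q : second factor vanishes, y is to the left of the interval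
    have h2 : eps ((2 : ℝ) ^ p * y) = 0 := by
      apply eps_of_Ico (by positivity)
      calc (2 : ℝ) ^ p * y < 2 ^ p * 2 ^ (-q + 1) :=
            mul_lt_mul_of_pos_left hyq2 (zpow_pos (by norm_num) _)
      _ = 2 ^ (p + (-q + 1)) := (zpow_add₀ (by norm_num) _ _).symm
      _ ≤ 2 ^ (0 : ℤ) := two_zpow_mono (by omega)
      _ = 1 := by norm_num
    rw [h2, mul_zero, Set.indicator_of_notMem]
    intro hmem
    exact absurd (lt_of_lt_of_le hyq2 (le_trans (two_zpow_mono (by omega)) hmem.1))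
      (lt_irrefl y)

end Pointwise

/-! ### the two key integral facts -/

lemma two_zpow_diff (p : ℤ) : (2 : ℝ) ^ (-p + 1) - 2 ^ (-p) = 2 ^ (-p) := by
  rw [zpow_add₀ (show (2:ℝ) ≠ 0 by norm_num)]
  ring

lemma integral_best {p : ℤ} (hp : 1 ≤ p) {x : ℝ} (hx1 : (2 : ℝ) ^ (-p) ≤ x)
    (hx2 : x < (2 : ℝ) ^ (-p + 1)) :
    (∫ y in (0:ℝ)..1, eps (fbh y * x) * eps ((2 : ℝ) ^ p * y)) = (2 : ℝ) ^ (-p) := by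
  have heq : Set.EqOn (fun y => eps (fbh y * x) * eps ((2 : ℝ) ^ p * y))
      (Set.indicator (Set.Ico ((2 : ℝ) ^ (-p)) ((2 : ℝ) ^ (-p + 1))) (fun _ => (1 : ℝ)))
      (Set.uIcc 0 1) := by
    intro y hy
    rw [Set.uIcc_of_le zero_le_one] at hy
    exact pointwise_eq_indicator hp hx1 hx2 hy.1 hy.2
  rw [intervalIntegral.integral_congr heq, intervalIntegral.integral_of_le zero_le_one,
    MeasureTheory.setIntegral_indicator measurableSet_Ico]
  have hsub : Set.Ico ((2 : ℝ) ^ (-p)) ((2 : ℝ) ^ (-p + 1)) ⊆ Set.Ioc (0 : ℝ) 1 := by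
    intro z hz
    exact ⟨lt_of_lt_of_le (zpow_pos (by norm_num) _) hz.1,
      le_of_lt (lt_of_lt_of_le hz.2 (two_zpow_le_one (by omega)))⟩
  rw [Set.inter_eq_self_of_subset_right hsub, MeasureTheory.setIntegral_const,
    Real.volume_real_Ico_of_le (two_zpow_mono (by omega)), smul_eq_mul, mul_one,
      two_zpow_diff]

lemma integral_ub {p : ℤ} (hp : 1 ≤ p) {x : ℝ} (hx1 : (2 : ℝ) ^ (-p) ≤ x)
    (hx2 : x < (2 : ℝ) ^ (-p + 1)) {u : ℝ} (hu : 0 ≤ u) :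
    (∫ y in (0:ℝ)..1, eps (fbh y * x) * eps (u * y)) ≤ (2 : ℝ) ^ (-p) := by
  set L : ℝ := (2 : ℝ) ^ (-p + 1) with hLdef
  have hL1 : L ≤ 1 := two_zpow_le_one (by omega)
  have hL0 : (0 : ℝ) < L := zpow_pos (by norm_num) _
  have hIf : ∀ a b : ℝ, IntervalIntegrable (fun y => eps (fbh y * x) * eps (u * y)) volume a b :=
    intervalIntegrable_of_bdd (measurable_integrand x u) 1 (fun t => by
      rw [abs_mul]
      calc |eps (fbh t * x)| * |eps (u * t)| ≤ 1 * 1 :=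
            mul_le_mul (eps_abs_le_one _) (eps_abs_le_one _) (abs_nonneg _) zero_le_one
      _ = 1 := by norm_num)
  rw [← intervalIntegral.integral_add_adjacent_intervals (hIf 0 L) (hIf L 1)]
  have hsecond : (∫ y in L..1, eps (fbh y * x) * eps (u * y)) = 0 := by
    have heq : Set.EqOn (fun y => eps (fbh y * x) * eps (u * y)) (fun _ => (0 : ℝ))
        (Set.uIcc L 1) := by
      intro y hy
      rw [Set.uIcc_of_le hL1] at hy
      simp only
      rw [first_factor_zero hp hx1 hx2 hy.1 hy.2, zero_mul]
    rw [intervalIntegral.integral_congr heq]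
    simp
  rw [hsecond, add_zero]
  have hfirst : (∫ y in (0:ℝ)..L, eps (fbh y * x) * eps (u * y)) ≤
      ∫ y in (0:ℝ)..L, eps (u * y) := by
    apply intervalIntegral.integral_mono_on hL0.le (hIf 0 L)
      (intervalIntegrable_of_bdd
        (measurable_eps.comp (measurable_id.const_mul u)) 1
        (fun t => eps_abs_le_one _) 0 L)
    intro y _
    show eps (fbh y * x) * eps (u * y) ≤ eps (u * y)
    have h1 := eps_le_one (fbh y * x)
    have h2 := eps_nonneg (u * y)
    have h3 := eps_nonneg (fbh y * x)
    nlinarith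
  have hhalf := integral_eps_mul_le hu hL0.le
  have hLv : L / 2 = (2 : ℝ) ^ (-p) := by
    rw [hLdef, zpow_add₀ (show (2:ℝ) ≠ 0 by norm_num)]
    ring
  linarith

/-! ### the inner integral as a function of `x` -/

noncomputable def innerInt (g : ℝ → ℝ) (x : ℝ) : ℝ :=
  ∫ y in Set.Ioc (0:ℝ) 1, eps (fbh y * x) * eps (g x * y)

lemma innerInt_eq (g : ℝ → ℝ) (x : ℝ) :
    (∫ y in (0:ℝ)..1, eps (fbh y * x) * eps (g x * y)) = innerInt g x :=
  intervalIntegral.integral_of_le zero_le_one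

lemma innerInt_stronglyMeasurable {g : ℝ → ℝ} (hg : Measurable g) :
    MeasureTheory.StronglyMeasurable (innerInt g) := by
  have hF : Measurable fun z : ℝ × ℝ => eps (fbh z.2 * z.1) * eps (g z.1 * z.2) :=
    (measurable_eps.comp ((measurable_fbh.comp measurable_snd).mul measurable_fst)).mul
      (measurable_eps.comp ((hg.comp measurable_fst).mul measurable_snd))
  exact hF.stronglyMeasurable.integral_prod_right'

lemma innerInt_abs_le (g : ℝ → ℝ) (x : ℝ) : |innerInt g x| ≤ 1 := by
  rw [← innerInt_eq]
  have h := intervalIntegral.norm_integral_le_of_norm_le_const (C := 1)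
    (f := fun y => eps (fbh y * x) * eps (g x * y)) (a := 0) (b := 1) (fun t _ => by
      rw [Real.norm_eq_abs, abs_mul]
      calc |eps (fbh t * x)| * |eps (g x * t)| ≤ 1 * 1 :=
            mul_le_mul (eps_abs_le_one _) (eps_abs_le_one _) (abs_nonneg _) zero_le_one
      _ = 1 := by norm_num)
  simpa using h

lemma innerInt_integrableOn {g : ℝ → ℝ} (hg : Measurable g) :
    IntegrableOn (innerInt g) (Set.Ioo (0:ℝ) 1) volume := by
  refine MeasureTheory.Integrable.mono' (integrableOn_const (C := (1:ℝ)) ?_)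
    (innerInt_stronglyMeasurable hg).aestronglyMeasurable
    (Filter.Eventually.of_forall fun x => by simpa using innerInt_abs_le g x)
  rw [Real.volume_Ioo]
  exact ENNReal.ofReal_ne_top

lemma innerInt_le_inv_fbh {g : ℝ → ℝ} (hgnn : ∀ x, 0 ≤ g x) {x : ℝ}
    (hx : x ∈ Set.Ioo (0:ℝ) 1) : innerInt g x ≤ (fbh x)⁻¹ := by
  obtain ⟨p, hp, h1, h2⟩ := mem_dyadic hx.1 hx.2
  rw [← innerInt_eq, fbh_eq h1 h2, ← zpow_neg]
  exact integral_ub hp h1 h2 (hgnn x)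

lemma innerInt_fbh_eq {x : ℝ} (hx : x ∈ Set.Ioo (0:ℝ) 1) : innerInt fbh x = (fbh x)⁻¹ := by
  obtain ⟨p, hp, h1, h2⟩ := mem_dyadic hx.1 hx.2
  rw [← innerInt_eq, fbh_eq h1 h2, ← zpow_neg]
  exact integral_best hp h1 h2

/-! ### the integral of `(fbh)⁻¹` over `(0,1)` -/

lemma integrableOn_inv_fbh : IntegrableOn (fun x => (fbh x)⁻¹) (Set.Ioo (0:ℝ) 1) volume := by
  have hfin : MeasureTheory.volume (Set.Ioo (0:ℝ) 1) < ⊤ := by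
    rw [Real.volume_Ioo]; exact ENNReal.ofReal_lt_top
  refine MeasureTheory.Integrable.mono'
    ((integrableOn_const hfin.ne) :
      IntegrableOn (fun _ : ℝ => (1:ℝ)) (Set.Ioo (0:ℝ) 1) volume)
    measurable_fbh.inv.aestronglyMeasurable ?_
  · rw [MeasureTheory.ae_restrict_iff' measurableSet_Ioo]
    refine Filter.Eventually.of_forall fun x hx => ?_
    obtain ⟨p, hp, h1, h2⟩ := mem_dyadic hx.1 hx.2
    rw [Real.norm_eq_abs, fbh_eq h1 h2, ← zpow_neg,
      abs_of_nonneg (zpow_pos (show (0:ℝ) < 2 by norm_num) _).le]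
    exact two_zpow_le_one (by omega)

lemma Ioo_eq_iUnion :
    Set.Ioo (0:ℝ) 1 = ⋃ n : ℕ, Set.Ico ((2:ℝ) ^ (-(n:ℤ) - 1)) ((2:ℝ) ^ (-(n:ℤ))) := by
  ext x
  simp only [Set.mem_Ioo, Set.mem_iUnion, Set.mem_Ico]
  constructor
  · rintro ⟨h0, h1⟩
    obtain ⟨p, hp, hx1, hx2⟩ := mem_dyadic h0 h1
    refine ⟨(p - 1).toNat, ?_, ?_⟩
    · have hcast : (((p - 1).toNat : ℤ)) = p - 1 := Int.toNat_of_nonneg (by omega)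
      rw [hcast, show -(p - 1) - 1 = -p by ring]
      exact hx1
    · have hcast : (((p - 1).toNat : ℤ)) = p - 1 := Int.toNat_of_nonneg (by omega)
      rw [hcast, show -(p - 1) = -p + 1 by ring]
      exact hx2
  · rintro ⟨n, h1, h2⟩
    exact ⟨lt_of_lt_of_le (zpow_pos (by norm_num) _) h1,
      lt_of_lt_of_le h2 (two_zpow_le_one (by omega))⟩

lemma dyadic_disjoint :
    Pairwise (Function.onFun Disjoint
      fun n : ℕ => Set.Ico ((2:ℝ) ^ (-(n:ℤ) - 1)) ((2:ℝ) ^ (-(n:ℤ)))) := by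
  intro m n hmn
  refine Set.disjoint_left.2 fun {x} hxm hxn => ?_
  rcases lt_or_gt_of_ne hmn with h | h
  · exact absurd (lt_of_lt_of_le hxn.2 (le_trans (two_zpow_mono (by omega)) hxm.1))
      (lt_irrefl x)
  · exact absurd (lt_of_lt_of_le hxm.2 (le_trans (two_zpow_mono (by omega)) hxn.1))
      (lt_irrefl x)

lemma integral_inv_fbh : (∫ x in Set.Ioo (0:ℝ) 1, (fbh x)⁻¹) = 1 / 3 := by
  rw [Ioo_eq_iUnion, MeasureTheory.integral_iUnion (fun _ => measurableSet_Ico)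
    dyadic_disjoint (by rw [← Ioo_eq_iUnion]; exact integrableOn_inv_fbh)]
  have hterm : ∀ n : ℕ,
      (∫ x in Set.Ico ((2:ℝ) ^ (-(n:ℤ) - 1)) ((2:ℝ) ^ (-(n:ℤ))), (fbh x)⁻¹)
        = (1/4 : ℝ) * (1/4) ^ n := by
    intro n
    have hcongr : ∀ x ∈ Set.Ico ((2:ℝ) ^ (-(n:ℤ) - 1)) ((2:ℝ) ^ (-(n:ℤ))),
        (fbh x)⁻¹ = (2:ℝ) ^ (-(n:ℤ) - 1) := by
      intro x hx
      have h1 : (2:ℝ) ^ (-((n:ℤ) + 1)) ≤ x := by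
        rw [show -((n:ℤ) + 1) = -(n:ℤ) - 1 by ring]; exact hx.1
      have h2 : x < (2:ℝ) ^ (-((n:ℤ) + 1) + 1) := by
        rw [show -((n:ℤ) + 1) + 1 = -(n:ℤ) by ring]; exact hx.2
      rw [fbh_eq h1 h2, ← zpow_neg, show -((n:ℤ) + 1) = -(n:ℤ) - 1 by ring]
    have hdiff : (2:ℝ) ^ (-(n:ℤ)) - 2 ^ (-(n:ℤ) - 1) = 2 ^ (-(n:ℤ) - 1) := by
      rw [show -(n:ℤ) = (-(n:ℤ) - 1) + 1 by ring, zpow_add₀ (show (2:ℝ) ≠ 0 by norm_num)]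
      ring
    rw [MeasureTheory.setIntegral_congr_fun measurableSet_Ico hcongr,
      MeasureTheory.setIntegral_const, Real.volume_real_Ico_of_le (two_zpow_mono (by omega)),
      hdiff, smul_eq_mul]
    have h1 : (2:ℝ) ^ (-(n:ℤ) - 1) * 2 ^ (-(n:ℤ) - 1) = ((2:ℝ) ^ (2 * n + 2 : ℕ))⁻¹ := by
      rw [← zpow_add₀ (show (2:ℝ) ≠ 0 by norm_num),
        show (-(n:ℤ) - 1) + (-(n:ℤ) - 1) = -((2 * n + 2 : ℕ) : ℤ) by push_cast; ring,
        zpow_neg, zpow_natCast]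
    have h2 : ((1:ℝ)/4) * (1/4) ^ n = ((2:ℝ) ^ (2 * n + 2 : ℕ))⁻¹ := by
      rw [← pow_succ' ((1:ℝ)/4) n, one_div, inv_pow,
        show (2 * n + 2 : ℕ) = 2 * (n + 1) by ring, pow_mul]
      norm_num
    rw [h1, h2]
  calc (∑' n : ℕ, ∫ x in Set.Ico ((2:ℝ) ^ (-(n:ℤ) - 1)) ((2:ℝ) ^ (-(n:ℤ))), (fbh x)⁻¹)
      = ∑' n : ℕ, (1/4 : ℝ) * (1/4) ^ n := tsum_congr hterm
  _ = (1/4 : ℝ) * ∑' n : ℕ, ((1:ℝ)/4) ^ n := tsum_mul_left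
  _ = 1/3 := by
      rw [tsum_geometric_of_lt_one (by norm_num) (by norm_num)]
      norm_num

/-! ### the double integral -/

lemma double_eq (g : ℝ → ℝ) :
    (∫ x in (0:ℝ)..1, ∫ y in (0:ℝ)..1, eps (fbh y * x) * eps (g x * y))
      = ∫ x in Set.Ioo (0:ℝ) 1, innerInt g x := by
  rw [intervalIntegral.integral_of_le zero_le_one, MeasureTheory.integral_Ioc_eq_integral_Ioo]
  exact MeasureTheory.setIntegral_congr_fun measurableSet_Ioo (fun x _ => innerInt_eq g x)

lemma double_le {g : ℝ → ℝ} (hg : Measurable g) (hgnn : ∀ x, 0 ≤ g x) :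
    (∫ x in (0:ℝ)..1, ∫ y in (0:ℝ)..1, eps (fbh y * x) * eps (g x * y)) ≤ 1 / 3 := by
  rw [double_eq]
  calc (∫ x in Set.Ioo (0:ℝ) 1, innerInt g x) ≤ ∫ x in Set.Ioo (0:ℝ) 1, (fbh x)⁻¹ :=
        MeasureTheory.setIntegral_mono_on (innerInt_integrableOn hg) integrableOn_inv_fbh
          measurableSet_Ioo (fun x hx => innerInt_le_inv_fbh hgnn hx)
  _ = 1/3 := integral_inv_fbh

lemma double_fbh :
    (∫ x in (0:ℝ)..1, ∫ y in (0:ℝ)..1, eps (fbh y * x) * eps (fbh x * y)) = 1 / 3 := by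
  rw [double_eq,
    MeasureTheory.setIntegral_congr_fun measurableSet_Ioo (fun x hx => innerInt_fbh_eq hx)]
  exact integral_inv_fbh

/-- For the first-black-hat strategy `f` in the two-player continuous Levine game:
for every `p ≥ 1` and `x ∈ [2^{-p}, 2^{-(p-1)})`,
`sup_{u ≥ 0} ∫₀¹ ε(f(y)x) ε(uy) dy = 2^{-p} = ∫₀¹ ε(f(y)x) ε(f(x)y) dy`; consequently
`sup_g ∫₀¹∫₀¹ ε(f(y)x) ε(g(x)y) dx dy = 1/3`, attained at `g = f`: the first-black-hat
strategy is a best response to itself. -/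
theorem fbh_best_response :
    (∀ p : ℕ, 1 ≤ p →
      ∀ x ∈ Set.Ico ((2 : ℝ) ^ (-(p : ℤ))) ((2 : ℝ) ^ (-(p : ℤ) + 1)),
        sSup {r : ℝ | ∃ u : ℝ, 0 ≤ u ∧
            r = ∫ y in (0 : ℝ)..1, eps (fbh y * x) * eps (u * y)} = (2 : ℝ) ^ (-(p : ℤ)) ∧
        (∫ y in (0 : ℝ)..1, eps (fbh y * x) * eps (fbh x * y)) = (2 : ℝ) ^ (-(p : ℤ))) ∧
    sSup {P : ℝ | ∃ g : ℝ → ℝ, Measurable g ∧ (∀ x, 0 ≤ g x) ∧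
        P = ∫ x in (0 : ℝ)..1, ∫ y in (0 : ℝ)..1, eps (fbh y * x) * eps (g x * y)} = 1 / 3 ∧
    (∫ x in (0 : ℝ)..1, ∫ y in (0 : ℝ)..1, eps (fbh y * x) * eps (fbh x * y)) = 1 / 3 := by
  refine ⟨fun p hp x hx => ?_, ?_, double_fbh⟩
  · obtain ⟨hx1, hx2⟩ := hx
    have hp' : 1 ≤ (p : ℤ) := by exact_mod_cast hp
    have hmem : (2 : ℝ) ^ (-(p : ℤ)) ∈ {r : ℝ | ∃ u : ℝ, 0 ≤ u ∧
        r = ∫ y in (0 : ℝ)..1, eps (fbh y * x) * eps (u * y)} :=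
      ⟨(2 : ℝ) ^ ((p : ℤ)), (zpow_pos (by norm_num) _).le, (integral_best hp' hx1 hx2).symm⟩
    constructor
    · refine le_antisymm (csSup_le ⟨_, hmem⟩ ?_) (le_csSup ⟨(2 : ℝ) ^ (-(p : ℤ)), ?_⟩ hmem)
      · rintro r ⟨u, hu, rfl⟩
        exact integral_ub hp' hx1 hx2 hu
      · rintro r ⟨u, hu, rfl⟩
        exact integral_ub hp' hx1 hx2 hu
    · rw [fbh_eq hx1 hx2]
      exact integral_best hp' hx1 hx2
  · have hmem : (1/3 : ℝ) ∈ {P : ℝ | ∃ g : ℝ → ℝ, Measurable g ∧ (∀ x, 0 ≤ g x) ∧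
        P = ∫ x in (0 : ℝ)..1, ∫ y in (0 : ℝ)..1, eps (fbh y * x) * eps (g x * y)} :=
      ⟨fbh, measurable_fbh, fun x => (fbh_pos x).le, double_fbh.symm⟩
    refine le_antisymm (csSup_le ⟨_, hmem⟩ ?_) (le_csSup ⟨(1/3 : ℝ), ?_⟩ hmem)
    · rintro P ⟨g, hg, hgnn, rfl⟩
      exact double_le hg hgnn
    · rintro P ⟨g, hg, hgnn, rfl⟩
      exact double_le hg hgnn
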